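/- For the Johnson scheme coefficients b_i = ((n+2)w(n−w) − n·i(n−i+1)) / ((n−2i)(n−2i+2)), one has Σ_{i=0}^{s−1} b_i = (w·s·(n−w) − C(s,2)·n) / (n − 2(s−1)), for all integers 1 ≤ s with n − 2(s−1) > 0. -/

import Mathlib

theorem stmt6 (n w s : ℕ) (hw : 0 < w) (hs : 1 ≤ s) (hn : 2 * s ≤ n) :
    (∑ i ∈ Finset.range s,
        (((n : ℝ) + 2) * w * ((n : ℝ) - w) - (n : ℝ) * i * ((n : ℝ) - i + 1)) /
          (((n : ℝ) - 2 * i) * ((n : ℝ) - 2 * i + 2)))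
      = ((w : ℝ) * s * ((n : ℝ) - w) - ((s : ℝ) * ((s : ℝ) - 1) / 2) * n) /
          ((n : ℝ) - 2 * ((s : ℝ) - 1)) := by
  induction s, hs using Nat.le_induction with
  | base =>
    have hn2 : (2:ℝ) ≤ (n:ℝ) := by exact_mod_cast hn
    simp only [Finset.sum_range_one]
    push_cast
    have h1 : (n:ℝ) ≠ 0 := by linarith
    have h2 : (n:ℝ) + 2 ≠ 0 := by linarith
    rw [div_eq_div_iff (by norm_num [h1, h2]) (by norm_num [h1])]
    ring
  | succ s hs1 ih =>
    have hn' : 2 * s ≤ n := by omega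
    have hc : (2:ℝ) * s + 2 ≤ (n:ℝ) := by exact_mod_cast hn
    have ih' := ih hn'
    rw [Finset.sum_range_succ, ih']
    push_cast
    have h1 : (n:ℝ) - 2 * s ≠ 0 := by linarith
    have h2 : (n:ℝ) - 2 * s + 2 ≠ 0 := by linarith
    have h3 : (n:ℝ) - 2 * ((s:ℝ) - 1) ≠ 0 := by linarith
    have h4 : (n:ℝ) - 2 * ((s:ℝ) + 1 - 1) ≠ 0 := by linarith
    rw [div_add_div _ _ h3 (mul_ne_zero h1 h2), div_eq_div_iff (mul_ne_zero h3 (mul_ne_zero h1 h2)) h4]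
    ring
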